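/- Suppose X : ℕ → Fin m contains n consecutive occurrences of the basic color sequence b_m = (0,1,...,m−1), the i-th starting at index τ_i, with τ_1 ≤ k−1 and τ_{i+1} − m − τ_i ≤ k−1 for all 1 ≤ i ≤ n; and suppose Y : ℕ → Fin m has k consecutive repetitions of the reversed sequence b'_m starting at index n−1. Then there is no infinite directed path from (0,0) in ℕ² consisting of rightward and upward unit steps avoiding all blocked points, where (i,j) is blocked iff X(i) = Y(j). -/
import Mathlib

/-- An infinite directed path in ℕ²: starts at (0,0) and each step increases
exactly one coordinate by 1. -/
def IsDirPath (p : ℕ → ℕ × ℕ) : Prop :=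
  p 0 = (0, 0) ∧
    ∀ n, p (n + 1) = ((p n).1 + 1, (p n).2) ∨ p (n + 1) = ((p n).1, (p n).2 + 1)

/-- First time a monotone unit-step walk reaches at least `c`. -/
noncomputable def hitT (x : ℕ → ℕ) (c : ℕ) : ℕ := sInf {t | c ≤ x t}

lemma walk_mono {x : ℕ → ℕ} (h : ∀ t, x (t+1) = x t + 1 ∨ x (t+1) = x t) : Monotone x := by
  apply monotone_nat_of_le_succ
  intro t; rcases h t with h | h <;> omega

lemma walk_ivt {x : ℕ → ℕ} (h : ∀ t, x (t+1) ≤ x t + 1) :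
    ∀ t2 t1 v, t1 ≤ t2 → x t1 ≤ v → v ≤ x t2 → ∃ t, t1 ≤ t ∧ t ≤ t2 ∧ x t = v := by
  intro t2
  induction t2 with
  | zero =>
    intro t1 v h1 h2 h3
    have ht1 : t1 = 0 := by omega
    subst ht1
    exact ⟨0, le_rfl, le_rfl, by omega⟩
  | succ t2 ih =>
    intro t1 v h1 h2 h3
    by_cases he : t1 = t2 + 1
    · subst he
      exact ⟨t2 + 1, le_rfl, le_rfl, by omega⟩
    · have h1' : t1 ≤ t2 := by omega
      by_cases hv : v ≤ x t2
      · obtain ⟨t, ha, hb, hc⟩ := ih t1 v h1' h2 hv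
        exact ⟨t, ha, by omega, hc⟩
      · have hs := h t2
        exact ⟨t2 + 1, by omega, le_rfl, by omega⟩

lemma hitT_spec {x : ℕ → ℕ} (hx0 : x 0 = 0) (hstep : ∀ t, x (t+1) ≤ x t + 1)
    {c : ℕ} (h : ∃ t, c ≤ x t) : x (hitT x c) = c := by
  have hdef : hitT x c = sInf {t | c ≤ x t} := rfl
  have hmem : c ≤ x (hitT x c) := Nat.sInf_mem h
  rcases Nat.eq_zero_or_pos (hitT x c) with h0 | h0
  · rw [h0] at hmem ⊢; omega
  · have h1 : x (hitT x c - 1) < c := by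
      by_contra hc
      push_neg at hc
      have := Nat.sInf_le (s := {t | c ≤ x t}) hc
      omega
    have h2 := hstep (hitT x c - 1)
    have h3 : hitT x c - 1 + 1 = hitT x c := by omega
    rw [h3] at h2
    omega

lemma hitT_mono {x : ℕ → ℕ} {c c' : ℕ} (hcc : c ≤ c') (h : ∃ t, c' ≤ x t) :
    hitT x c ≤ hitT x c' :=
  Nat.sInf_le (le_trans hcc (Nat.sInf_mem h))

lemma lt_of_lt_hitT {x : ℕ → ℕ} {c t : ℕ} (h : t < hitT x c) : x t < c := by
  by_contra hc
  push_neg at hc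
  have hdef : hitT x c = sInf {t | c ≤ x t} := rfl
  have := Nat.sInf_le (s := {t | c ≤ x t}) hc
  omega

/-- Every point `(c, j)` with `j` between the heights at which column `c` is entered
and left lies on the path, hence satisfies `P`. -/
lemma seg_avoid {x y : ℕ → ℕ} {P : ℕ → ℕ → Prop}
    (hx0 : x 0 = 0)
    (hstep : ∀ t, (x (t+1) = x t + 1 ∧ y (t+1) = y t) ∨ (x (t+1) = x t ∧ y (t+1) = y t + 1))
    (havoid : ∀ t, P (x t) (y t))
    {c : ℕ} (hatt : ∃ t, c + 1 ≤ x t) :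
    ∀ j, y (hitT x c) ≤ j → j ≤ y (hitT x (c+1)) → P c j := by
  intro j hj1 hj2
  have hxstep : ∀ t, x (t+1) ≤ x t + 1 := by
    intro t; rcases hstep t with ⟨h, _⟩ | ⟨h, _⟩ <;> omega
  have hxmono : Monotone x := walk_mono (by
    intro t; rcases hstep t with ⟨h, _⟩ | ⟨h, _⟩
    · exact Or.inl h
    · exact Or.inr h)
  have hystep : ∀ t, y (t+1) ≤ y t + 1 := by
    intro t; rcases hstep t with ⟨_, h⟩ | ⟨_, h⟩ <;> omega
  have hattc : ∃ t, c ≤ x t := hatt.imp fun t ht => by omega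
  have hx1 : x (hitT x c) = c := hitT_spec hx0 hxstep hattc
  have hx2 : x (hitT x (c+1)) = c + 1 := hitT_spec hx0 hxstep hatt
  set t1 := hitT x c
  set t2 := hitT x (c+1)
  have h12 : t1 ≤ t2 := hitT_mono (by omega) hatt
  have ht2pos : 0 < t2 := by
    rcases Nat.eq_zero_or_pos t2 with h | h
    · rw [h] at hx2; omega
    · exact h
  have hlt : x (t2 - 1) < c + 1 := lt_of_lt_hitT (by omega)
  have hstep2 := hstep (t2 - 1)
  have heq : t2 - 1 + 1 = t2 := by omega
  rw [heq] at hstep2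
  have hy2 : y (t2 - 1) = y t2 ∧ x (t2 - 1) = c := by
    rcases hstep2 with ⟨ha, hb⟩ | ⟨ha, hb⟩ <;> omega
  have h112 : t1 ≤ t2 - 1 := by
    rcases Nat.lt_or_ge t1 t2 with h | h
    · omega
    · have : t1 = t2 := by omega
      rw [this, hx2] at hx1; omega
  obtain ⟨t, htl, htr, hty⟩ := walk_ivt hystep (t2 - 1) t1 j h112 hj1 (by rw [hy2.1]; exact hj2)
  have hm1 := hxmono htl
  have hm2 := hxmono htr
  have hxt : x t = c := by omega
  have := havoid t
  rw [hxt, hty] at this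
  exact this

lemma galois1 (x y : ℕ → ℕ) (hx0 : x 0 = 0)
    (hxstep : ∀ t, x (t+1) ≤ x t + 1) (hxmono : Monotone x)
    {c j : ℕ} (hattc : ∃ t, c ≤ x t)
    (h : j ≤ y (hitT x c)) : x (hitT y j) ≤ c := by
  have h1 : hitT y j ≤ hitT x c := Nat.sInf_le h
  calc x (hitT y j) ≤ x (hitT x c) := hxmono h1
    _ = c := hitT_spec hx0 hxstep hattc

lemma galois2 (x y : ℕ → ℕ) (hxmono : Monotone x) (hymono : Monotone y)
    (hy0 : y 0 = 0) (hystep : ∀ t, y (t+1) ≤ y t + 1)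
    {c j : ℕ} (hattc : ∃ t, c ≤ x t) (hattj : ∃ t, j ≤ y t)
    (h : x (hitT y j) < c) : j ≤ y (hitT x c) := by
  have h1 : c ≤ x (hitT x c) := Nat.sInf_mem hattc
  have h2 : hitT y j ≤ hitT x c := by
    by_contra hc
    push_neg at hc
    have := hxmono hc.le
    omega
  calc j = y (hitT y j) := (hitT_spec hy0 hystep hattj).symm
    _ ≤ y (hitT x c) := hymono h2

/-- Crossing lemma: if a band of width `m` with forbidden value `a` at level
`ψ a ≤ j ≤ ψ (a+1)` is crossed, then `f` must drop by at least 2 somewhere. -/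
lemma cross {m : ℕ} (f ψ : ℕ → ℕ) (hm : 1 ≤ m) (hψ : Monotone ψ)
    (hav : ∀ a, a < m → ∀ j, ψ a ≤ j → j ≤ ψ (a+1) → f j ≠ a)
    (hb : ∀ j, f j < m) :
    ∃ j, ψ 0 < j ∧ j ≤ ψ m ∧ f j + 2 ≤ f (j - 1) := by
  by_contra hcon
  push_neg at hcon
  have H : ∀ a, a < m → ∀ j, ψ a ≤ j → j ≤ ψ (a+1) → a + 1 ≤ f j := by
    intro a
    induction a with
    | zero =>
      intro _ j h1 h2
      have := hav 0 (by omega) j h1 h2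
      omega
    | succ a ih =>
      intro ha j h1 h2
      have hbase : a + 2 ≤ f (ψ (a+1)) := by
        have hv1 := ih (by omega) (ψ (a+1)) (hψ (Nat.le_succ a)) le_rfl
        have hv2 := hav (a+1) ha (ψ (a+1)) le_rfl (hψ (Nat.le_succ (a+1)))
        omega
      have key : ∀ d, ψ (a+1) + d ≤ ψ (a+1+1) → a + 2 ≤ f (ψ (a+1) + d) := by
        intro d
        induction d with
        | zero => intro _; simpa using hbase
        | succ d ihd =>
          intro hd
          have hd' : ψ (a+1) + d ≤ ψ (a+1+1) := by omega
          have hprev := ihd hd'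
          have hj1 : ψ 0 < ψ (a+1) + d + 1 := by
            have := hψ (Nat.zero_le (a+1)); omega
          have hj2 : ψ (a+1) + d + 1 ≤ ψ m := by
            have := hψ (show a+1+1 ≤ m by omega); omega
          have hnd := hcon (ψ (a+1) + d + 1) hj1 hj2
          have hne := hav (a+1) ha (ψ (a+1) + d + 1) (by omega) (by omega)
          have he : ψ (a+1) + d + 1 - 1 = ψ (a+1) + d := by omega
          rw [he] at hnd
          show a + 2 ≤ f (ψ (a+1) + d + 1)
          omega
      have := key (j - ψ (a+1)) (by omega)
      rw [show ψ (a+1) + (j - ψ (a+1)) = j from by omega] at this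
      exact this
  have h1 := H (m-1) (by omega) (ψ (m-1)) le_rfl (hψ (Nat.le_succ (m-1)))
  have h2 := hb (ψ (m-1))
  have h3 : ψ (m-1) ≤ ψ (m-1+1) := hψ (Nat.le_succ (m-1))
  have h4 : m - 1 + 1 = m := by omega
  rw [h4] at h1
  omega

theorem blocking_lemma (m n k : ℕ) (hm : 2 ≤ m) (hn : 1 ≤ n) (hk : 1 ≤ k)
    (X Y : ℕ → Fin m) (τ : ℕ → ℕ)
    (hocc : ∀ i, 1 ≤ i → i ≤ n + 1 → ∀ j < m, (X (τ i + j) : ℕ) = j)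
    (hmono : ∀ i, 1 ≤ i → i ≤ n → τ i < τ (i + 1))
    (hτ1 : τ 1 ≤ k - 1)
    (hgap : ∀ i, 1 ≤ i → i ≤ n → τ (i + 1) ≤ τ i + m + (k - 1))
    (hY : ∀ i < k, ∀ j < m, (Y (n - 1 + i * m + j) : ℕ) = m - 1 - j) :
    ¬ ∃ p : ℕ → ℕ × ℕ, IsDirPath p ∧ ∀ t, X (p t).1 ≠ Y (p t).2 := by
  rintro ⟨p, ⟨hp0, hpstep⟩, havoidP⟩
  set x : ℕ → ℕ := fun t => (p t).1 with hxdef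
  set y : ℕ → ℕ := fun t => (p t).2 with hydef
  have hx0 : x 0 = 0 := by simp [hxdef, hp0]
  have hy0 : y 0 = 0 := by simp [hydef, hp0]
  have hstep : ∀ t, (x (t+1) = x t + 1 ∧ y (t+1) = y t) ∨
      (x (t+1) = x t ∧ y (t+1) = y t + 1) := by
    intro t
    rcases hpstep t with h | h
    · left; constructor <;> simp [hxdef, hydef, h]
    · right; constructor <;> simp [hxdef, hydef, h]
  have havoid : ∀ t, X (x t) ≠ Y (y t) := fun t => havoidP t
  have hxstep : ∀ t, x (t+1) ≤ x t + 1 := by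
    intro t; rcases hstep t with ⟨h, _⟩ | ⟨h, _⟩ <;> omega
  have hystep : ∀ t, y (t+1) ≤ y t + 1 := by
    intro t; rcases hstep t with ⟨_, h⟩ | ⟨_, h⟩ <;> omega
  have hxmono : Monotone x := walk_mono (by
    intro t; rcases hstep t with ⟨h, _⟩ | ⟨h, _⟩
    · exact Or.inl h
    · exact Or.inr h)
  have hymono : Monotone y := walk_mono (by
    intro t; rcases hstep t with ⟨_, h⟩ | ⟨_, h⟩
    · exact Or.inr h
    · exact Or.inl h)
  have hsum : ∀ t, x t + y t = t := by
    intro t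
    induction t with
    | zero => omega
    | succ t ih => rcases hstep t with ⟨h1, h2⟩ | ⟨h1, h2⟩ <;> omega
  have hstep' : ∀ t, (y (t+1) = y t + 1 ∧ x (t+1) = x t) ∨
      (y (t+1) = y t ∧ x (t+1) = x t + 1) := by
    intro t
    rcases hstep t with ⟨h1, h2⟩ | ⟨h1, h2⟩
    · exact Or.inr ⟨h2, h1⟩
    · exact Or.inl ⟨h2, h1⟩
  have havoid' : ∀ t, (fun j c => X c ≠ Y j) (y t) (x t) := fun t => havoidP t
  -- monotonicity of the entry heights
  have hrrmono : ∀ c c', c ≤ c' → (∃ t, c' ≤ x t) →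
      y (hitT x c) ≤ y (hitT x c') := fun c c' h h' => hymono (hitT_mono h h')
  have hssmono : ∀ j j', j ≤ j' → (∃ t, j' ≤ y t) →
      x (hitT y j) ≤ x (hitT y j') := fun j j' h h' => hxmono (hitT_mono h h')
  -- spacing of the occurrences
  have tau_step : ∀ ℓ, 1 ≤ ℓ → ℓ ≤ n → τ ℓ + m ≤ τ (ℓ+1) := by
    intro ℓ h1 h2
    by_contra hc
    push_neg at hc
    have hlt := hmono ℓ h1 h2
    have h3 : (X (τ ℓ + (τ (ℓ+1) - τ ℓ)) : ℕ) = τ (ℓ+1) - τ ℓ :=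
      hocc ℓ h1 (by omega) (τ (ℓ+1) - τ ℓ) (by omega)
    have h4 : (X (τ (ℓ+1) + 0) : ℕ) = 0 := hocc (ℓ+1) (by omega) (by omega) 0 (by omega)
    rw [show τ (ℓ+1) + 0 = τ ℓ + (τ (ℓ+1) - τ ℓ) from by omega] at h4
    omega
  have htau_mono : ∀ ℓ ℓ', 1 ≤ ℓ → ℓ ≤ ℓ' → ℓ' ≤ n+1 → τ ℓ ≤ τ ℓ' := by
    intro ℓ ℓ' h1 h12 h2
    have key : ∀ d, ℓ + d ≤ n+1 → τ ℓ ≤ τ (ℓ + d) := by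
      intro d
      induction d with
      | zero => intro _; simp
      | succ d ih =>
        intro h
        have hs := tau_step (ℓ+d) (by omega) (by omega)
        have := ih (by omega)
        show τ ℓ ≤ τ (ℓ + d + 1)
        omega
    have := key (ℓ' - ℓ) (by omega)
    rw [show ℓ + (ℓ' - ℓ) = ℓ' from by omega] at this
    exact this
  -- location of drops of Y
  have ydrop_loc : ∀ j, 1 ≤ j → (Y j : ℕ) + 2 ≤ (Y (j-1) : ℕ) →
      j ≤ n - 1 ∨ n + k*m - 1 ≤ j := by
    intro j hj hdrop
    by_contra hc
    push_neg at hc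
    obtain ⟨hc1, hc2⟩ := hc
    have hmpos : 0 < m := by omega
    obtain ⟨q, b, hq, hbm, he1⟩ : ∃ q b, q < k ∧ b < m ∧ j - 1 = n - 1 + q * m + b := by
      have hebound : j - n < k * m := by omega
      have hq : (j - n) / m < k := (Nat.div_lt_iff_lt_mul hmpos).mpr hebound
      have hbm : (j - n) % m < m := Nat.mod_lt _ hmpos
      have hdm := Nat.div_add_mod (j - n) m
      have hcomm : (j - n) / m * m = m * ((j - n) / m) := Nat.mul_comm _ _
      exact ⟨(j - n) / m, (j - n) % m, hq, hbm, by omega⟩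
    rw [he1] at hdrop
    have h1 := hY q hq b hbm
    by_cases hb1 : b + 1 < m
    · have h2 := hY q hq (b+1) hb1
      rw [show j = n - 1 + q * m + (b + 1) from by omega] at hdrop
      omega
    · omega
  -- location of rises of X
  have xrise_loc : ∀ c, (X (c-1) : ℕ) + 2 ≤ (X c : ℕ) → ∀ ℓ, 1 ≤ ℓ → ℓ ≤ n+1 →
      c ≤ τ ℓ ∨ τ ℓ + m + 1 ≤ c := by
    intro c hr ℓ h1 h2
    by_contra hc
    push_neg at hc
    obtain ⟨hc1, hc2⟩ := hc
    obtain ⟨a, ha1, ha2, rfl⟩ : ∃ a, 1 ≤ a ∧ a ≤ m ∧ c = τ ℓ + a :=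
      ⟨c - τ ℓ, by omega, by omega, by omega⟩
    rw [show τ ℓ + a - 1 = τ ℓ + (a - 1) from by omega] at hr
    by_cases ham : a < m
    · have h3 := hocc ℓ h1 h2 (a-1) (by omega)
      have h4 := hocc ℓ h1 h2 a ham
      omega
    · have h3 := hocc ℓ h1 h2 (m-1) (by omega)
      rw [show τ ℓ + (a-1) = τ ℓ + (m-1) from by omega] at hr
      have h5 := (X (τ ℓ + a)).isLt
      omega
  -- crossing a vertical band produces a drop of Y
  have hxcross : ∀ ℓ, 1 ≤ ℓ → ℓ ≤ n+1 → (∃ t, τ ℓ + m ≤ x t) →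
      ∃ j, y (hitT x (τ ℓ)) < j ∧ j ≤ y (hitT x (τ ℓ + m)) ∧
        (Y j : ℕ) + 2 ≤ (Y (j-1) : ℕ) := by
    intro ℓ h1 h2 hatt
    have hψ : Monotone (fun a => y (hitT x (τ ℓ + min a m))) := by
      intro a b hab
      exact hymono (hitT_mono (by omega) (hatt.imp fun t ht => by omega))
    have hav : ∀ a, a < m → ∀ j, (fun a => y (hitT x (τ ℓ + min a m))) a ≤ j →
        j ≤ (fun a => y (hitT x (τ ℓ + min a m))) (a+1) → (fun j => (Y j : ℕ)) j ≠ a := by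
      intro a ha j hja hjb
      simp only at hja hjb
      rw [show τ ℓ + min a m = τ ℓ + a from by omega] at hja
      rw [show τ ℓ + min (a+1) m = τ ℓ + a + 1 from by omega] at hjb
      have hne : X (τ ℓ + a) ≠ Y j :=
        seg_avoid (P := fun c j => X c ≠ Y j) hx0 hstep havoid
          (hatt.imp fun t ht => by omega) j hja hjb
      intro hYa
      apply hne
      have hXa : (X (τ ℓ + a) : ℕ) = a := hocc ℓ h1 h2 a ha
      apply Fin.val_injective
      have hYa' : (Y j : ℕ) = a := hYa
      omega
    obtain ⟨j, hj1, hj2, hj3⟩ := cross (m := m) (fun j => (Y j : ℕ))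
      (fun a => y (hitT x (τ ℓ + min a m))) (by omega) hψ hav (fun j => (Y j).isLt)
    rw [show τ ℓ + min 0 m = τ ℓ from by omega] at hj1
    rw [show τ ℓ + min m m = τ ℓ + m from by omega] at hj2
    exact ⟨j, hj1, hj2, hj3⟩
  -- crossing a horizontal band produces a rise of X
  have hycross : ∀ q, q < k → (∃ t, (n - 1 + q * m) + m ≤ y t) →
      ∃ c, x (hitT y (n - 1 + q * m)) < c ∧ c ≤ x (hitT y (n - 1 + q * m + m)) ∧
        (X (c-1) : ℕ) + 2 ≤ (X c : ℕ) := by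
    intro q hq hatt
    have hψ : Monotone (fun b => x (hitT y (n - 1 + q * m + min b m))) := by
      intro a b hab
      exact hxmono (hitT_mono (by omega) (hatt.imp fun t ht => by omega))
    have hav : ∀ b, b < m → ∀ c, (fun b => x (hitT y (n - 1 + q * m + min b m))) b ≤ c →
        c ≤ (fun b => x (hitT y (n - 1 + q * m + min b m))) (b+1) →
        (fun c => m - 1 - (X c : ℕ)) c ≠ b := by
      intro b hb c hca hcb
      simp only at hca hcb
      rw [show n - 1 + q * m + min b m = n - 1 + q * m + b from by omega] at hca
      rw [show n - 1 + q * m + min (b+1) m = n - 1 + q * m + b + 1 from by omega] at hcb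
      have hne : X c ≠ Y (n - 1 + q * m + b) :=
        seg_avoid (P := fun j c => X c ≠ Y j) hy0 hstep' havoid'
          (hatt.imp fun t ht => by omega) c hca hcb
      intro hfc
      apply hne
      have hYv : (Y (n - 1 + q * m + b) : ℕ) = m - 1 - b := hY q hq b hb
      have hX := (X c).isLt
      apply Fin.val_injective
      have hfc' : m - 1 - (X c : ℕ) = b := hfc
      omega
    obtain ⟨c, hc1, hc2, hc3⟩ := cross (m := m) (fun c => m - 1 - (X c : ℕ))
      (fun b => x (hitT y (n - 1 + q * m + min b m))) (by omega) hψ hav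
      (fun c => by show m - 1 - (X c : ℕ) < m; have := (X c).isLt; omega)
    rw [show n - 1 + q * m + min 0 m = n - 1 + q * m from by omega] at hc1
    rw [show n - 1 + q * m + min m m = n - 1 + q * m + m from by omega] at hc2
    have hXc := (X c).isLt
    have hXc1 := (X (c-1)).isLt
    exact ⟨c, hc1, hc2, by omega⟩
  -- chain lemma: all n+1 bands cannot be crossed at low heights
  have Xchain : (∀ ℓ, 1 ≤ ℓ → ℓ ≤ n+1 → ∃ t, τ ℓ + m ≤ x t) →
      (∀ ℓ, 1 ≤ ℓ → ℓ ≤ n+1 → y (hitT x (τ ℓ + m)) ≤ n + k*m - 2) → False := by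
    intro hcr hsm
    have hchain : ∀ ℓ, 1 ≤ ℓ → ℓ ≤ n+1 →
        ℓ ≤ y (hitT x (τ ℓ + m)) ∧ ∃ j, ℓ ≤ j ∧ j ≤ n - 1 := by
      intro ℓ h1
      induction ℓ, h1 using Nat.le_induction with
      | base =>
        intro h2
        obtain ⟨j, hj1, hj2, hj3⟩ := hxcross 1 le_rfl (by omega) (hcr 1 le_rfl (by omega))
        have hloc := ydrop_loc j (by omega) hj3
        have hs := hsm 1 le_rfl (by omega)
        exact ⟨by omega, j, by omega, by omega⟩
      | succ ℓ hℓ ih =>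
        intro h2
        have ih' := ih (by omega)
        obtain ⟨j, hj1, hj2, hj3⟩ := hxcross (ℓ+1) (by omega) h2 (hcr (ℓ+1) (by omega) h2)
        have hge : y (hitT x (τ ℓ + m)) ≤ y (hitT x (τ (ℓ+1))) :=
          hrrmono _ _ (tau_step ℓ (by omega) (by omega))
            ((hcr (ℓ+1) (by omega) h2).imp fun t ht => by omega)
        have hloc := ydrop_loc j (by omega) hj3
        have hs := hsm (ℓ+1) (by omega) h2
        exact ⟨by omega, j, by omega, by omega⟩
    obtain ⟨_, j, hj1, hj2⟩ := hchain (n+1) (by omega) le_rfl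
    omega
  -- the path reaches height n - 1 + k*m
  have ytop : ∃ t, n - 1 + k*m ≤ y t := by
    by_contra hc
    push_neg at hc
    have hxub : ∀ M, ∃ t, M ≤ x t := by
      intro M
      refine ⟨M + (n - 1 + k*m), ?_⟩
      have h1 := hsum (M + (n - 1 + k*m))
      have h2 := hc (M + (n - 1 + k*m))
      omega
    apply Xchain (fun ℓ _ _ => hxub (τ ℓ + m))
    intro ℓ h1 h2
    have := hc (hitT x (τ ℓ + m))
    omega
  have hyatt : ∀ j, j ≤ n - 1 + k*m → ∃ t, j ≤ y t :=
    fun j hj => ytop.imp fun t ht => le_trans hj ht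
  -- the k horizontal band crossings
  have hqmle : ∀ q, q < k → n - 1 + q * m + m ≤ n - 1 + k * m := by
    intro q hq
    have e1 : (q+1) * m = q * m + m := Nat.succ_mul q m
    have e2 : (q+1) * m ≤ k * m := Nat.mul_le_mul_right m (by omega)
    omega
  have hcq' : ∀ q, ∃ c, q < k →
      x (hitT y (n - 1 + q * m)) < c ∧ c ≤ x (hitT y (n - 1 + q * m + m)) ∧
      (X (c-1) : ℕ) + 2 ≤ (X c : ℕ) := by
    intro q
    by_cases hq : q < k
    · obtain ⟨c, h⟩ := hycross q hq (hyatt _ (hqmle q hq))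
      exact ⟨c, fun _ => h⟩
    · exact ⟨0, fun h => absurd h hq⟩
  choose cf hcf using hcq'
  have hc_lb : ∀ q, q < k → x (hitT y (n - 1 + q * m)) < cf q := fun q hq => (hcf q hq).1
  have hc_ub : ∀ q, q < k → cf q ≤ x (hitT y (n - 1 + q * m + m)) := fun q hq => (hcf q hq).2.1
  have hc_rise : ∀ q, q < k → (X (cf q - 1) : ℕ) + 2 ≤ (X (cf q) : ℕ) :=
    fun q hq => (hcf q hq).2.2
  have hc_pos : ∀ q, q < k → 1 ≤ cf q := by
    intro q hq
    have := hc_lb q hq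
    omega
  have hcf_top : ∀ q, q < k → cf q ≤ x (hitT y (n - 1 + k*m)) := fun q hq =>
    le_trans (hc_ub q hq) (hssmono _ _ (hqmle q hq) ytop)
  have hcf_step : ∀ q, q + 1 < k → cf q < cf (q+1) := by
    intro q hq
    have ha := hc_ub q (by omega)
    have hb := hc_lb (q+1) hq
    have he : n - 1 + q * m + m = n - 1 + (q+1) * m := by
      have e : (q+1) * m = q * m + m := Nat.succ_mul q m
      omega
    rw [he] at ha
    omega
  have hcf_gap : ∀ q', q' < k → ∀ q, q ≤ q' → cf q + (q' - q) ≤ cf q' := by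
    intro q'
    induction q' with
    | zero =>
      intro _ q hq
      have : q = 0 := by omega
      subst this
      simp
    | succ q' ih =>
      intro hk' q hq
      rcases Nat.eq_or_lt_of_le hq with he | hl
      · rw [he]; simp
      · have h1 := ih (by omega) q (by omega)
        have h2 := hcf_step q' hk'
        omega
  -- no straddling: earlier crossing left of a band, later crossing right of it
  have hstraddle : ∀ ℓ, 1 ≤ ℓ → ℓ ≤ n+1 → ∀ q q', q < q' → q' < k →
      cf q ≤ τ ℓ → τ ℓ + m + 1 ≤ cf q' → False := by
    intro ℓ hℓ1 hℓ2 q q' hqq hq' hcql hcqr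
    have hq : q < k := by omega
    have hA : ∃ t, τ ℓ + m ≤ x t :=
      ⟨hitT y (n - 1 + k*m), by have := hcf_top q' hq'; omega⟩
    obtain ⟨j, hj1, hj2, hj3⟩ := hxcross ℓ hℓ1 hℓ2 hA
    have hattc : ∃ t, cf q ≤ x t := ⟨hitT y (n - 1 + k*m), hcf_top q hq⟩
    have hattj : ∃ t, n - 1 + q * m ≤ y t := hyatt _ (by have := hqmle q hq; omega)
    have hG2 : n - 1 + q * m ≤ y (hitT x (cf q)) :=
      galois2 x y hxmono hymono hy0 hystep hattc hattj (hc_lb q hq)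
    have hrr1 : y (hitT x (cf q)) ≤ y (hitT x (τ ℓ)) :=
      hrrmono _ _ hcql (hA.imp fun t ht => by omega)
    have hloc := ydrop_loc j (by omega) hj3
    have hrr2 : y (hitT x (τ ℓ + m)) ≤ y (hitT x (cf q' - 1)) :=
      hrrmono _ _ (by omega) ⟨hitT y (n - 1 + k*m), by have := hcf_top q' hq'; omega⟩
    have hG1 : y (hitT x (cf q' - 1)) < n - 1 + q' * m + m := by
      by_contra hcg
      push_neg at hcg
      have hss := galois1 x y hx0 hxstep hxmono
        ⟨hitT y (n - 1 + k*m), by have := hcf_top q' hq'; omega⟩ hcg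
      have := hc_ub q' hq'
      omega
    have e1 : (q'+1) * m = q' * m + m := Nat.succ_mul q' m
    have e2 : (q'+1) * m ≤ k * m := Nat.mul_le_mul_right m (by omega)
    have e3 : 0 ≤ q * m := Nat.zero_le _
    omega
  have hside : ∀ q, q < k → ∀ ℓ, 1 ≤ ℓ → ℓ ≤ n+1 → cf q ≤ τ ℓ ∨ τ ℓ + m + 1 ≤ cf q :=
    fun q hq ℓ h1 h2 => xrise_loc (cf q) (hc_rise q hq) ℓ h1 h2
  -- final case analysis
  rcases hside 0 (by omega) 1 (by omega) (by omega) with h1 | h1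
  · -- all crossings happen left of the first band
    have hall : cf (k-1) ≤ τ 1 := by
      rcases hside (k-1) (by omega) 1 (by omega) (by omega) with h | h
      · exact h
      · rcases Nat.eq_zero_or_pos (k-1) with h0 | h0
        · rw [h0] at h; omega
        · exact (hstraddle 1 (by omega) (by omega) 0 (k-1) (by omega) (by omega) h1 h).elim
    have hgap2 := hcf_gap (k-1) (by omega) 0 (by omega)
    have := hc_pos 0 (by omega)
    omega
  · -- the first crossing is right of some band; take the largest such band
    classical
    set P : ℕ → Prop := fun ℓ => τ ℓ + m + 1 ≤ cf 0 ∧ 1 ≤ ℓ with hPdef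
    have hP1 : P 1 := ⟨h1, le_rfl⟩
    set L := Nat.findGreatest P (n+1) with hLdef
    have hPL : P L := Nat.findGreatest_spec (by omega : 1 ≤ n+1) hP1
    have hLge : 1 ≤ L := hPL.2
    have hLcf : τ L + m + 1 ≤ cf 0 := hPL.1
    have hLle : L ≤ n+1 := Nat.findGreatest_le (n+1)
    by_cases hLtop : L = n+1
    · -- all n+1 bands are crossed below the first horizontal band
      have hupper : y (hitT x (cf 0 - 1)) < n - 1 + 0 * m + m := by
        by_contra hcg
        push_neg at hcg
        have hss := galois1 x y hx0 hxstep hxmono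
          ⟨hitT y (n - 1 + k*m), by have := hcf_top 0 (by omega); omega⟩ hcg
        have := hc_ub 0 (by omega)
        have := hc_pos 0 (by omega)
        omega
      apply Xchain
      · intro ℓ hl1 hl2
        have hτm := htau_mono ℓ (n+1) hl1 hl2 le_rfl
        refine ⟨hitT y (n - 1 + k*m), ?_⟩
        have := hcf_top 0 (by omega)
        rw [hLtop] at hLcf
        omega
      · intro ℓ hl1 hl2
        have hτm := htau_mono ℓ (n+1) hl1 hl2 le_rfl
        rw [hLtop] at hLcf
        have h5 : y (hitT x (τ ℓ + m)) ≤ y (hitT x (cf 0 - 1)) :=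
          hrrmono _ _ (by omega)
            ⟨hitT y (n - 1 + k*m), by have := hcf_top 0 (by omega); omega⟩
        have e0 : 0 * m = 0 := Nat.zero_mul m
        have e4 : 1 * m ≤ k * m := Nat.mul_le_mul_right m hk
        have e5 : 1 * m = m := Nat.one_mul m
        omega
    · -- the maximal band L: all crossings squeezed into the gap after band L
      have hLn : L ≤ n := by omega
      have hnP : ¬ P (L+1) :=
        Nat.findGreatest_is_greatest (by omega : L < L+1) (by omega : L+1 ≤ n+1)
      have hc0le : cf 0 ≤ τ (L+1) := by
        rcases hside 0 (by omega) (L+1) (by omega) (by omega) with h | h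
        · exact h
        · exact absurd ⟨h, by omega⟩ hnP
      have hallub : ∀ q, q < k → cf q ≤ τ (L+1) := by
        intro q hq
        rcases hside q hq (L+1) (by omega) (by omega) with h | h
        · exact h
        · rcases Nat.eq_zero_or_pos q with h0 | h0
          · subst h0; omega
          · exact (hstraddle (L+1) (by omega) (by omega) 0 q (by omega) hq hc0le h).elim
      have hgap2 := hcf_gap (k-1) (by omega) 0 (by omega)
      have hgapτ := hgap L hLge hLn
      have hub := hallub (k-1) (by omega)
      omega
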